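/- (Surrogate minorization for the G2DQPCA objective) Let F₁,…,F_ℓ be m×n matrices over the real quaternions, let w, v ∈ ℍⁿ be quaternion vectors, and let s ≥ 1 be real. Then Σ_{i=1}^{ℓ} Σ_{a=1}^{m} |(Fᵢw)_a|^s ≥ s·Σ_{i=1}^{ℓ} Σ_{a=1}^{m} |(Fᵢv)_a|^{s−1}·Re(conj(sign((Fᵢv)_a))·(Fᵢw)_a) + (1−s)·Σ_{i=1}^{ℓ} Σ_{a=1}^{m} |(Fᵢv)_a|^s, where terms with (Fᵢv)_a = 0 contribute 0 to the middle sum, and equality holds when w = v. -/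

import Mathlib

open scoped Classical

/-- The sign of a quaternion: `a/|a|` if `a ≠ 0`, and `0` if `a = 0`. -/
noncomputable def qsign (a : Quaternion ℝ) : Quaternion ℝ :=
  if a = 0 then 0 else ‖a‖⁻¹ • a

lemma re_le_norm_quat (q : Quaternion ℝ) : q.re ≤ ‖q‖ := by
  have h1 : Quaternion.normSq q = ‖q‖ * ‖q‖ := Quaternion.normSq_eq_norm_mul_self q
  have h2 : Quaternion.normSq q = q.re ^ 2 + q.imI ^ 2 + q.imJ ^ 2 + q.imK ^ 2 :=
    Quaternion.normSq_def' q
  nlinarith [norm_nonneg q, sq_nonneg q.imI, sq_nonneg q.imJ, sq_nonneg q.imK,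
    sq_nonneg (q.re - ‖q‖)]

lemma young_aux {x y s : ℝ} (hx : 0 ≤ x) (hy : 0 < y) (hs : 1 ≤ s) :
    s * (y ^ (s - 1) * x) + (1 - s) * y ^ s ≤ x ^ s := by
  have ht : (-1 : ℝ) ≤ x / y - 1 := by
    have : 0 ≤ x / y := div_nonneg hx hy.le
    linarith
  have hb := one_add_mul_self_le_rpow_one_add ht hs
  rw [add_sub_cancel] at hb
  have hys : (0 : ℝ) < y ^ s := Real.rpow_pos_of_pos hy s
  have hmul := mul_le_mul_of_nonneg_left hb hys.le
  have hdiv : y ^ s * (x / y) ^ s = x ^ s := by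
    rw [Real.div_rpow hx hy.le, mul_div_cancel₀]
    exact (Real.rpow_pos_of_pos hy s).ne'
  have hy1 : y ^ s * (x / y) = y ^ (s - 1) * x := by
    rw [Real.rpow_sub hy, Real.rpow_one]
    field_simp
  rw [hdiv] at hmul
  calc s * (y ^ (s - 1) * x) + (1 - s) * y ^ s
      = y ^ s * (1 + s * (x / y - 1)) := by rw [← hy1]; ring
    _ ≤ x ^ s := hmul

lemma pt_le (q w : Quaternion ℝ) {s : ℝ} (hs : 1 ≤ s) :
    s * (‖q‖ ^ (s - 1) * (star (qsign q) * w).re) + (1 - s) * ‖q‖ ^ s ≤ ‖w‖ ^ s := by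
  by_cases hq : q = 0
  · simp [qsign, hq, Quaternion.re_zero, Real.zero_rpow (by linarith : s ≠ 0)]
    exact Real.rpow_nonneg (norm_nonneg w) s
  · have hqn : 0 < ‖q‖ := norm_pos_iff.mpr hq
    have hre : (star (qsign q) * w).re ≤ ‖w‖ := by
      have h1 : (star (qsign q) * w).re ≤ ‖star (qsign q) * w‖ := re_le_norm_quat _
      have h2 : ‖star (qsign q) * w‖ = ‖qsign q‖ * ‖w‖ := by
        rw [norm_mul, Quaternion.norm_star]
      have h3 : ‖qsign q‖ = 1 := by
        simp [qsign, hq, norm_smul, abs_of_pos (inv_pos.mpr hqn),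
          inv_mul_cancel₀ hqn.ne']
      rw [h2, h3, one_mul] at h1
      exact h1
    have hc : 0 ≤ ‖q‖ ^ (s - 1) := Real.rpow_nonneg (norm_nonneg q) _
    have key : s * (‖q‖ ^ (s - 1) * ‖w‖) + (1 - s) * ‖q‖ ^ s ≤ ‖w‖ ^ s :=
      young_aux (norm_nonneg w) hqn hs
    have : s * (‖q‖ ^ (s - 1) * (star (qsign q) * w).re)
        ≤ s * (‖q‖ ^ (s - 1) * ‖w‖) := by
      apply mul_le_mul_of_nonneg_left _ (by linarith : (0:ℝ) ≤ s)
      exact mul_le_mul_of_nonneg_left hre hc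
    linarith

lemma pt_eq (q : Quaternion ℝ) {s : ℝ} (hs : 1 ≤ s) :
    ‖q‖ ^ (s - 1) * (star (qsign q) * q).re = ‖q‖ ^ s := by
  by_cases hq : q = 0
  · simp [qsign, hq, Quaternion.re_zero, Real.zero_rpow (by linarith : s ≠ 0)]
  · have hqn : 0 < ‖q‖ := norm_pos_iff.mpr hq
    have h1 : star (qsign q) * q = (‖q‖⁻¹ * (Quaternion.normSq q) : ℝ) := by
      simp only [qsign, if_neg hq]
      rw [Quaternion.star_smul, smul_mul_assoc, Quaternion.star_mul_self,
        Quaternion.smul_coe]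
    rw [h1]
    have : ((‖q‖⁻¹ * (Quaternion.normSq q) : ℝ) : Quaternion ℝ).re
        = ‖q‖⁻¹ * (Quaternion.normSq q) := rfl
    rw [this, Quaternion.normSq_eq_norm_mul_self]
    have : ‖q‖⁻¹ * (‖q‖ * ‖q‖) = ‖q‖ := by field_simp
    rw [this, Real.rpow_sub hqn, Real.rpow_one]
    field_simp

/-- (Surrogate minorization for the G2DQPCA objective) For quaternion matrices
`F₁,…,F_ℓ ∈ ℍ^{m×n}`, quaternion vectors `w, v ∈ ℍⁿ` and real `s ≥ 1`,
`Σᵢ Σₐ |(Fᵢw)ₐ|^s ≥ s·Σᵢ Σₐ |(Fᵢv)ₐ|^{s-1}·Re(conj(sign((Fᵢv)ₐ))·(Fᵢw)ₐ)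
 + (1-s)·Σᵢ Σₐ |(Fᵢv)ₐ|^s`, with equality when `w = v`. -/
theorem stmt_11 (ℓ m n : ℕ) (F : Fin ℓ → Matrix (Fin m) (Fin n) (Quaternion ℝ))
    (w v : Fin n → Quaternion ℝ) (s : ℝ) (hs : 1 ≤ s) :
    (s * ∑ i, ∑ a, ‖(F i).mulVec v a‖ ^ (s - 1) *
          (star (qsign ((F i).mulVec v a)) * (F i).mulVec w a).re
        + (1 - s) * ∑ i, ∑ a, ‖(F i).mulVec v a‖ ^ s
      ≤ ∑ i, ∑ a, ‖(F i).mulVec w a‖ ^ s) ∧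
    (s * ∑ i, ∑ a, ‖(F i).mulVec v a‖ ^ (s - 1) *
          (star (qsign ((F i).mulVec v a)) * (F i).mulVec v a).re
        + (1 - s) * ∑ i, ∑ a, ‖(F i).mulVec v a‖ ^ s
      = ∑ i, ∑ a, ‖(F i).mulVec v a‖ ^ s) := by
  constructor
  · have h : ∀ i ∈ Finset.univ, ∀ a ∈ Finset.univ,
        s * (‖(F i).mulVec v a‖ ^ (s - 1) *
          (star (qsign ((F i).mulVec v a)) * (F i).mulVec w a).re)
        + (1 - s) * ‖(F i).mulVec v a‖ ^ s ≤ ‖(F i).mulVec w a‖ ^ s :=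
      fun i _ a _ => pt_le _ _ hs
    calc s * ∑ i, ∑ a, ‖(F i).mulVec v a‖ ^ (s - 1) *
          (star (qsign ((F i).mulVec v a)) * (F i).mulVec w a).re
        + (1 - s) * ∑ i, ∑ a, ‖(F i).mulVec v a‖ ^ s
        = ∑ i, ∑ a, (s * (‖(F i).mulVec v a‖ ^ (s - 1) *
            (star (qsign ((F i).mulVec v a)) * (F i).mulVec w a).re)
          + (1 - s) * ‖(F i).mulVec v a‖ ^ s) := by
          simp [Finset.mul_sum, Finset.sum_add_distrib]
      _ ≤ ∑ i, ∑ a, ‖(F i).mulVec w a‖ ^ s :=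
          Finset.sum_le_sum fun i hi => Finset.sum_le_sum (h i hi)
  · have h : ∀ i a, ‖(F i).mulVec v a‖ ^ (s - 1) *
        (star (qsign ((F i).mulVec v a)) * (F i).mulVec v a).re
        = ‖(F i).mulVec v a‖ ^ s := fun i a => pt_eq _ hs
    simp only [h]
    ring
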